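/- arXiv:2111.01473 — 6 statements merged into one kernel-verified Lean document; each statement's English description precedes it below -/
import Mathlib

section
/- Fix n ∈ ℕ and integers r₁,…,r_k ≥ 1 with r₁+⋯+r_k = n. Let G(r₁,…,r_k) be the undirected graph with loops whose adjacency matrix A has the anti-triangular block structure: the (i,j) block (of size rᵢ×r_j) is the all-ones matrix if i + j ≤ k + 1, and the zero matrix otherwise. Then the eigenvector centrality c of G(r₁,…,r_k), written in blocks c₁^(1),…,c₁^(r₁), c₂^(1),…, c_k^(r_k), satisfies: (a) within each block all components are equal, c_i^(1) = c_i^(2) = ⋯ = c_i^(r_i) for every i = 1,…,k; and (b) the block values are strictly decreasing, c₁^(1) > c₂^(1) > ⋯ > c_k^(1). -/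
open Matrix BigOperators

/-- The spectral radius of a real matrix: the supremum of the absolute values of its
complex eigenvalues. -/
noncomputable def specRad {m : Type*} [Fintype m] [DecidableEq m]
    (A : Matrix m m ℝ) : ℝ :=
  sSup {r : ℝ | ∃ μ ∈ spectrum ℂ (A.map (algebraMap ℝ ℂ)), r = ‖μ‖}

/-- The adjacency matrix of the undirected graph with loops `G(r₁,…,r_k)`:
nodes are indexed by pairs `⟨i, a⟩` with `i : Fin k` (the block) and `a : Fin (r i)`;
the `(i,j)` block is all-ones iff (1-based) `i + j ≤ k + 1`, i.e. (0-based) `i + j < k`. -/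
noncomputable def blockGraphAdj {k : ℕ} (r : Fin k → ℕ) :
    Matrix ((i : Fin k) × Fin (r i)) ((i : Fin k) × Fin (r i)) ℝ :=
  fun p q => if (p.1 : ℕ) + (q.1 : ℕ) < k then 1 else 0

/-- The eigenvector centrality of `G(r₁,…,r_k)` is constant on each block and its common
block values are strictly decreasing. -/
theorem eigenvector_ranking_blockGraph {n k : ℕ} (r : Fin k → ℕ)
    (hr : ∀ i, 1 ≤ r i) (hsum : ∑ i, r i = n)
    (c : ((i : Fin k) × Fin (r i)) → ℝ)
    (hpos : ∀ p, 0 < c p) (hnorm : ∑ p, c p = 1)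
    (heig : (blockGraphAdj r).mulVec c = specRad (blockGraphAdj r) • c) :
    (∀ (i : Fin k) (a b : Fin (r i)), c ⟨i, a⟩ = c ⟨i, b⟩) ∧
    (∀ i j : Fin k, i < j →
      c ⟨j, ⟨0, hr j⟩⟩ < c ⟨i, ⟨0, hr i⟩⟩) := by
  classical
  set ρ := specRad (blockGraphAdj r) with hρdef
  have heq : ∀ p : (i : Fin k) × Fin (r i),
      (∑ q : (i : Fin k) × Fin (r i),
        (if (p.1 : ℕ) + (q.1 : ℕ) < k then (1 : ℝ) else 0) * c q) = ρ * c p := by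
    intro p
    have h := congrFun heig p
    simpa [blockGraphAdj, Matrix.mulVec, dotProduct, smul_eq_mul] using h
  have hterm : ∀ (m : ℕ) (q : (i : Fin k) × Fin (r i)),
      0 ≤ (if m + (q.1 : ℕ) < k then (1 : ℝ) else 0) * c q := by
    intro m q
    exact mul_nonneg (by split <;> norm_num) (hpos q).le
  have hρpos : ∀ p : (i : Fin k) × Fin (r i), 0 < ρ := by
    intro p
    have hk : 0 < k := p.1.pos
    set q0 : (i : Fin k) × Fin (r i) := ⟨⟨0, hk⟩, ⟨0, hr _⟩⟩ with hq0
    have hle : c q0 ≤ ρ * c p := by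
      rw [← heq p]
      have h1 : (if (p.1 : ℕ) + ((q0.1 : Fin k) : ℕ) < k then (1 : ℝ) else 0) * c q0
          = c q0 := by
        simp [hq0, p.1.2]
      calc c q0 = _ := h1.symm
        _ ≤ _ := Finset.single_le_sum (fun q _ => hterm _ q) (Finset.mem_univ q0)
    nlinarith [hpos p, hpos q0]
  constructor
  · intro i a b
    have h := (heq ⟨i, a⟩).symm.trans (heq ⟨i, b⟩)
    exact mul_left_cancel₀ (ne_of_gt (hρpos ⟨i, a⟩)) h
  · intro i j hij
    have hk : 0 < k := i.pos
    have hik : (i : ℕ) < k := i.2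
    have hjk : (j : ℕ) < k := j.2
    have hij' : (i : ℕ) < (j : ℕ) := hij
    have hm : k - 1 - (i : ℕ) < k := by omega
    set qm : (i : Fin k) × Fin (r i) := ⟨⟨k - 1 - (i : ℕ), hm⟩, ⟨0, hr _⟩⟩ with hqm
    have hlt : ρ * c ⟨j, ⟨0, hr j⟩⟩ < ρ * c ⟨i, ⟨0, hr i⟩⟩ := by
      rw [← heq ⟨j, ⟨0, hr j⟩⟩, ← heq ⟨i, ⟨0, hr i⟩⟩]
      apply Finset.sum_lt_sum
      · intro q _
        by_cases h : (j : ℕ) + (q.1 : ℕ) < k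
        · have h' : (i : ℕ) + (q.1 : ℕ) < k := by omega
          simp [h, h']
        · simp only [h, if_false, zero_mul]
          exact hterm _ q
      · refine ⟨qm, Finset.mem_univ _, ?_⟩
        have h1 : ¬ ((j : ℕ) + (k - 1 - (i : ℕ)) < k) := by omega
        have h2 : (i : ℕ) + (k - 1 - (i : ℕ)) < k := by omega
        simpa [hqm, h1, h2] using hpos qm
    exact lt_of_mul_lt_mul_left hlt (hρpos ⟨i, ⟨0, hr i⟩⟩).le
end

section
/- Fix q ∈ (0,1), n ∈ ℕ, and integers r₁,…,r_k ≥ 1 with r₁+⋯+r_k = n. Let G(r₁,…,r_k) be the undirected graph with loops whose adjacency matrix A has (i,j) block equal to the all-ones rᵢ×r_j matrix when i + j ≤ k + 1 and zero otherwise. Then the PageRank centrality c of G(r₁,…,r_k) with damping factor q satisfies: within each block all components are equal, and the common block values strictly decrease: c₁^(1) = ⋯ = c₁^(r₁) > c₂^(1) = ⋯ = c₂^(r₂) > ⋯ > c_k^(1) = ⋯ = c_k^(r_k). -/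
open Matrix BigOperators

/-- The transpose of the row-normalized matrix obtained from `A`:
`B i j = A j i / (∑ t, A j t)`. -/
noncomputable def googleB {m : Type*} [Fintype m] (A : Matrix m m ℝ) : Matrix m m ℝ :=
  fun i j => A j i / ∑ t, A j t

/-- The PageRank centrality of `G(r₁,…,r_k)` with damping factor `q` is constant on each
block and its common block values are strictly decreasing. -/
theorem pageRank_ranking_blockGraph {n k : ℕ} (q : ℝ) (hq : q ∈ Set.Ioo (0:ℝ) 1)
    (r : Fin k → ℕ) (hr : ∀ i, 1 ≤ r i) (hsum : ∑ i, r i = n)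
    (c : ((i : Fin k) × Fin (r i)) → ℝ)
    (hpos : ∀ p, 0 < c p) (hnorm : ∑ p, c p = 1)
    (hPR : ∀ p, q * ∑ s, googleB (blockGraphAdj r) p s * c s = c p - (1 - q) / n) :
    (∀ (i : Fin k) (a b : Fin (r i)), c ⟨i, a⟩ = c ⟨i, b⟩) ∧
    (∀ i j : Fin k, i < j →
      c ⟨j, ⟨0, hr j⟩⟩ < c ⟨i, ⟨0, hr i⟩⟩) := by
  have hB : ∀ (p p' s : (i : Fin k) × Fin (r i)), p.1 = p'.1 →
      googleB (blockGraphAdj r) p s = googleB (blockGraphAdj r) p' s := by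
    intro p p' s h
    simp [googleB, blockGraphAdj, h]
  have hconst : ∀ (p p' : (i : Fin k) × Fin (r i)), p.1 = p'.1 → c p = c p' := by
    intro p p' h
    have h1 := hPR p
    have h2 := hPR p'
    have hs : ∑ s, googleB (blockGraphAdj r) p s * c s
         = ∑ s, googleB (blockGraphAdj r) p' s * c s :=
      Finset.sum_congr rfl fun s _ => by rw [hB p p' s h]
    rw [hs, h2] at h1
    linarith
  refine ⟨fun i a b => hconst ⟨i, a⟩ ⟨i, b⟩ rfl, ?_⟩
  intro i j hij
  have hk : 0 < k := Nat.lt_of_le_of_lt (Nat.zero_le _) i.2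
  -- row sums are positive
  have hrow : ∀ s : (i : Fin k) × Fin (r i), 0 < ∑ t, blockGraphAdj r s t := by
    intro s
    apply Finset.sum_pos'
    · intro t _
      unfold blockGraphAdj
      positivity
    · refine ⟨⟨⟨0, hk⟩, ⟨0, hr _⟩⟩, Finset.mem_univ _, ?_⟩
      have : (s.1 : ℕ) + 0 < k := by simpa using s.1.2
      simp [blockGraphAdj, this]
  have hBnn : ∀ s, googleB (blockGraphAdj r) ⟨j, ⟨0, hr j⟩⟩ s
      ≤ googleB (blockGraphAdj r) ⟨i, ⟨0, hr i⟩⟩ s := by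
    intro s
    unfold googleB
    gcongr
    · exact (hrow s).le
    · unfold blockGraphAdj
      have hij' : (i : ℕ) < (j : ℕ) := hij
      have hfj : (((⟨j, ⟨0, hr j⟩⟩ : (i : Fin k) × Fin (r i)).fst : Fin k) : ℕ) = (j : ℕ) := rfl
      have hfi : (((⟨i, ⟨0, hr i⟩⟩ : (i : Fin k) × Fin (r i)).fst : Fin k) : ℕ) = (i : ℕ) := rfl
      split_ifs with h1 h2
      · exact le_refl _
      · exact absurd (show (s.1 : ℕ) + (i : ℕ) < k by omega) h2
      · norm_num
      · exact le_refl _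
  have hjk : (j : ℕ) ≤ k := j.2.le
  have hj1 : 1 ≤ (j : ℕ) := Nat.one_le_iff_ne_zero.2 (by
    intro h; exact absurd hij (by simp [Fin.lt_def, h]))
  set s₀ : (i : Fin k) × Fin (r i) := ⟨⟨k - (j : ℕ), by omega⟩, ⟨0, hr _⟩⟩ with hs₀
  have hstrict : googleB (blockGraphAdj r) ⟨j, ⟨0, hr j⟩⟩ s₀ * c s₀
      < googleB (blockGraphAdj r) ⟨i, ⟨0, hr i⟩⟩ s₀ * c s₀ := by
    apply mul_lt_mul_of_pos_right _ (hpos s₀)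
    have hm : ((s₀.1 : Fin k) : ℕ) = k - (j : ℕ) := rfl
    have hij' : (i : ℕ) < (j : ℕ) := hij
    have e1 : blockGraphAdj r s₀ ⟨j, ⟨0, hr j⟩⟩ = 0 := by
      show (if k - (j : ℕ) + (j : ℕ) < k then (1:ℝ) else 0) = 0
      rw [if_neg (by omega)]
    have e2 : blockGraphAdj r s₀ ⟨i, ⟨0, hr i⟩⟩ = 1 := by
      show (if k - (j : ℕ) + (i : ℕ) < k then (1:ℝ) else 0) = 1
      rw [if_pos (by omega)]
    unfold googleB
    rw [e1, e2, zero_div]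
    exact div_pos one_pos (hrow s₀)
  have hsumlt : ∑ s, googleB (blockGraphAdj r) ⟨j, ⟨0, hr j⟩⟩ s * c s
      < ∑ s, googleB (blockGraphAdj r) ⟨i, ⟨0, hr i⟩⟩ s * c s := by
    apply Finset.sum_lt_sum (fun s _ => mul_le_mul_of_nonneg_right (hBnn s) (hpos s).le)
    exact ⟨s₀, Finset.mem_univ _, hstrict⟩
  have h1 := hPR ⟨i, ⟨0, hr i⟩⟩
  have h2 := hPR ⟨j, ⟨0, hr j⟩⟩
  nlinarith [hq.1, hsumlt]
end

section
/- Fix q ∈ (0,1), n ∈ ℕ, and integers r₁,…,r_k ≥ 1 with k ≥ 3 and r₁+⋯+r_k = n. Let G⃗(r₁,…,r_k) be the directed graph without loops whose adjacency matrix A⃗ has block structure: the diagonal (i,i) block is 1_{rᵢ} − I_{rᵢ} (all ones off-diagonal, zero diagonal); block (1,j) and block (j,1) are all-ones for all j; block (i,j) for 2 ≤ i, j with i > j is all-ones; block (i,j) for 2 ≤ i < j ≤ k (with (i,j) ≠ (1,j)) is zero, except block (1,j) is all-ones. Concretely, A⃗ equals the matrix whose (i,j) block (i ≠ j) is all-ones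 if i = 1, j = 1, or i > j, and zero if 2 ≤ i < j. Then the PageRank centrality c of G⃗(r₁,…,r_k) with damping factor q satisfies c₁^(1) = ⋯ = c₁^(r₁) > c₂^(1) = ⋯ = c₂^(r₂) > ⋯ > c_k^(1) = ⋯ = c_k^(r_k). -/
open Matrix BigOperators

/-- The adjacency matrix of the directed graph without loops `G⃗(r₁,…,r_k)`:
the diagonal `(i,i)` block is all-ones minus the identity; off-diagonal block `(i,j)` is
all-ones if `i` is the first block, `j` is the first block, or `i > j`, and zero when
`2 ≤ i < j` (1-based); here blocks are 0-based. -/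
noncomputable def dirBlockGraphAdj {k : ℕ} (r : Fin k → ℕ) :
    Matrix ((i : Fin k) × Fin (r i)) ((i : Fin k) × Fin (r i)) ℝ :=
  fun p q =>
    if p.1 = q.1 then (if p = q then 0 else 1)
    else if (p.1 : ℕ) = 0 ∨ (q.1 : ℕ) = 0 ∨ (q.1 : ℕ) < (p.1 : ℕ) then 1 else 0

/-- For `k ≥ 3`, the PageRank centrality of the loopless directed graph `G⃗(r₁,…,r_k)`
with damping factor `q` is constant on each block and its common block values are
strictly decreasing. -/
theorem pageRank_ranking_dirBlockGraph {n k : ℕ} (hk : 3 ≤ k)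
    (q : ℝ) (hq : q ∈ Set.Ioo (0:ℝ) 1)
    (r : Fin k → ℕ) (hr : ∀ i, 1 ≤ r i) (hsum : ∑ i, r i = n)
    (c : ((i : Fin k) × Fin (r i)) → ℝ)
    (hpos : ∀ p, 0 < c p) (hnorm : ∑ p, c p = 1)
    (hPR : ∀ p, q * ∑ s, googleB (dirBlockGraphAdj r) p s * c s = c p - (1 - q) / n) :
    (∀ (i : Fin k) (a b : Fin (r i)), c ⟨i, a⟩ = c ⟨i, b⟩) ∧
    (∀ i j : Fin k, i < j →
      c ⟨j, ⟨0, hr j⟩⟩ < c ⟨i, ⟨0, hr i⟩⟩) := by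
  obtain ⟨hq0, hq1⟩ := hq
  set A := dirBlockGraphAdj r with hAdef
  set D : ((i : Fin k) × Fin (r i)) → ℝ := fun p => ∑ t, A p t with hDdef
  have Adiag : ∀ s, A s s = 0 := by
    intro s; simp [hAdef, dirBlockGraphAdj]
  have Aoff : ∀ s t : (i : Fin k) × Fin (r i), s ≠ t →
      A s t = if ((s.1 : ℕ) = (t.1 : ℕ) ∨ (s.1 : ℕ) = 0 ∨ (t.1 : ℕ) = 0 ∨
        (t.1 : ℕ) < (s.1 : ℕ)) then 1 else 0 := by
    intro s t hst
    simp only [hAdef, dirBlockGraphAdj]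
    by_cases h1 : s.1 = t.1
    · rw [if_pos h1, if_neg hst, if_pos (Or.inl (by rw [h1]))]
    · rw [if_neg h1]
      have h1' : (s.1 : ℕ) ≠ (t.1 : ℕ) := fun h => h1 (Fin.ext h)
      by_cases h2 : (s.1 : ℕ) = 0 ∨ (t.1 : ℕ) = 0 ∨ (t.1 : ℕ) < (s.1 : ℕ)
      · rw [if_pos h2, if_pos (Or.inr h2)]
      · rw [if_neg h2, if_neg (by tauto)]
  have Aoff' : ∀ (ib jb : Fin k) (x : Fin (r ib)) (y : Fin (r jb)),
      (⟨ib, x⟩ : (i : Fin k) × Fin (r i)) ≠ ⟨jb, y⟩ →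
      A ⟨ib, x⟩ ⟨jb, y⟩ = if ((ib : ℕ) = (jb : ℕ) ∨ (ib : ℕ) = 0 ∨ (jb : ℕ) = 0 ∨
        (jb : ℕ) < (ib : ℕ)) then 1 else 0 :=
    fun ib jb x y h => Aoff _ _ h
  have hA01 : ∀ s t, A s t = 0 ∨ A s t = 1 := by
    intro s t
    rcases eq_or_ne s t with rfl | h
    · exact Or.inl (Adiag s)
    · rw [Aoff s t h]; split_ifs <;> simp
  have hAnn : ∀ s t, 0 ≤ A s t := by
    intro s t; rcases hA01 s t with h | h <;> rw [h] <;> norm_num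
  have hDnn : ∀ s, 0 ≤ D s := fun s => Finset.sum_nonneg fun t _ => hAnn s t
  have hk0 : 0 < k := by omega
  have hk1 : 1 < k := by omega
  have hk2 : 2 < k := by omega
  have hDpos : ∀ s, 0 < D s := by
    intro s
    rcases Nat.eq_zero_or_pos (s.1 : ℕ) with h0 | h0
    · have hne : s ≠ ⟨⟨1, hk1⟩, ⟨0, hr _⟩⟩ := by
        intro h; rw [h] at h0; simp at h0
      have h1 : A s ⟨⟨1, hk1⟩, ⟨0, hr _⟩⟩ = 1 := by
        rw [Aoff _ _ hne, if_pos (Or.inr (Or.inl h0))]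
      calc (0:ℝ) < 1 := one_pos
        _ = A s ⟨⟨1, hk1⟩, ⟨0, hr _⟩⟩ := h1.symm
        _ ≤ D s := Finset.single_le_sum (fun t _ => hAnn s t) (Finset.mem_univ _)
    · have hne : s ≠ ⟨⟨0, hk0⟩, ⟨0, hr _⟩⟩ := by
        intro h; rw [h] at h0; simp at h0
      have h1 : A s ⟨⟨0, hk0⟩, ⟨0, hr _⟩⟩ = 1 := by
        rw [Aoff _ _ hne, if_pos (Or.inr (Or.inr (Or.inl rfl)))]
      calc (0:ℝ) < 1 := one_pos
        _ = A s ⟨⟨0, hk0⟩, ⟨0, hr _⟩⟩ := h1.symm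
        _ ≤ D s := Finset.single_le_sum (fun t _ => hAnn s t) (Finset.mem_univ _)
  -- the row sum only depends on the block
  have hDrow : ∀ s : (i : Fin k) × Fin (r i), D s =
      (∑ t : (i : Fin k) × Fin (r i),
        if ((s.1 : ℕ) = (t.1 : ℕ) ∨ (s.1 : ℕ) = 0 ∨ (t.1 : ℕ) = 0 ∨
          (t.1 : ℕ) < (s.1 : ℕ)) then (1:ℝ) else 0) - 1 := by
    intro s
    have hpt : ∀ t, A s t =
        (if ((s.1 : ℕ) = (t.1 : ℕ) ∨ (s.1 : ℕ) = 0 ∨ (t.1 : ℕ) = 0 ∨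
          (t.1 : ℕ) < (s.1 : ℕ)) then (1:ℝ) else 0) - (if t = s then 1 else 0) := by
      intro t
      rcases eq_or_ne s t with rfl | h
      · rw [Adiag, if_pos (Or.inl rfl), if_pos rfl]; ring
      · rw [Aoff s t h, if_neg (Ne.symm h)]; ring
    have h2 : D s = ∑ t, ((if ((s.1 : ℕ) = (t.1 : ℕ) ∨ (s.1 : ℕ) = 0 ∨ (t.1 : ℕ) = 0 ∨
          (t.1 : ℕ) < (s.1 : ℕ)) then (1:ℝ) else 0) - (if t = s then 1 else 0)) :=
      Finset.sum_congr rfl fun t _ => hpt t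
    rw [h2, Finset.sum_sub_distrib, Finset.sum_ite_eq' Finset.univ s (fun _ => (1:ℝ))]
    simp
  -- the key difference identity derived from the PageRank equations
  have key : ∀ p p', c p - c p' = q * ∑ s, (A s p - A s p') / D s * c s := by
    intro p p'
    have h3 : q * ∑ s, googleB A p s * c s - q * ∑ s, googleB A p' s * c s
        = c p - c p' := by rw [hPR p, hPR p']; ring
    rw [← h3, ← mul_sub, ← Finset.sum_sub_distrib]
    congr 1
    refine Finset.sum_congr rfl fun s _ => ?_
    simp only [googleB, hDdef]
    ring
  -- when the rows towards p and p' differ only at p and p'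
  have swap_key : ∀ p p' : (i : Fin k) × Fin (r i),
      (∀ s, A s p - A s p' = (if s = p' then (1:ℝ) else 0) - (if s = p then 1 else 0)) →
      c p + q * (c p / D p) = c p' + q * (c p' / D p') := by
    intro p p' hpt
    rcases eq_or_ne p p' with rfl | hne
    · rfl
    have e1 : ∀ s, (A s p - A s p') / D s * c s =
        (if s = p' then c p' / D p' else 0) - (if s = p then c p / D p else 0) := by
      intro s
      rw [hpt s]
      rcases eq_or_ne s p' with rfl | h1
      · rw [if_pos rfl, if_neg (Ne.symm hne), if_pos rfl, if_neg (Ne.symm hne)]; ring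
      · rcases eq_or_ne s p with rfl | h2
        · rw [if_neg h1, if_pos rfl, if_neg h1, if_pos rfl]; ring
        · rw [if_neg h1, if_neg h2, if_neg h1, if_neg h2]; ring
    have hs : ∑ s, (A s p - A s p') / D s * c s = c p' / D p' - c p / D p := by
      rw [Finset.sum_congr rfl fun s _ => e1 s, Finset.sum_sub_distrib,
        Finset.sum_ite_eq' Finset.univ p' (fun _ => c p' / D p'),
        Finset.sum_ite_eq' Finset.univ p (fun _ => c p / D p)]
      simp
    have hkey := key p p'
    rw [hs] at hkey
    linear_combination hkey
  -- Part 1 : c is constant on blocks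
  have part1 : ∀ (i : Fin k) (a b : Fin (r i)), c ⟨i, a⟩ = c ⟨i, b⟩ := by
    intro i a b
    rcases eq_or_ne a b with rfl | hab
    · rfl
    have hne : (⟨i, a⟩ : (i : Fin k) × Fin (r i)) ≠ ⟨i, b⟩ := by
      simp [hab]
    have hpt : ∀ s, A s ⟨i, a⟩ - A s ⟨i, b⟩ =
        (if s = (⟨i, b⟩ : (i : Fin k) × Fin (r i)) then (1:ℝ) else 0) -
        (if s = (⟨i, a⟩ : (i : Fin k) × Fin (r i)) then 1 else 0) := by
      intro s
      rcases eq_or_ne s ⟨i, a⟩ with rfl | h1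
      · rw [Adiag, Aoff _ _ hne, if_pos (Or.inl rfl), if_neg hne, if_pos rfl]
      · rcases eq_or_ne s ⟨i, b⟩ with rfl | h2
        · rw [Adiag, Aoff _ _ (Ne.symm hne), if_pos (Or.inl rfl), if_pos rfl,
            if_neg (Ne.symm hne)]
        · rw [Aoff _ _ h1, Aoff _ _ h2, if_neg h2, if_neg h1]; ring
    have h := swap_key ⟨i, a⟩ ⟨i, b⟩ hpt
    have hDe : D ⟨i, a⟩ = D ⟨i, b⟩ := by
      rw [hDrow ⟨i, a⟩, hDrow ⟨i, b⟩]
    rw [hDe] at h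
    have hD := hDpos ⟨i, b⟩
    have h2 : (c ⟨i, a⟩ - c ⟨i, b⟩) * (1 + q / D ⟨i, b⟩) = 0 := by
      linear_combination h
    have hfac : 0 < 1 + q / D ⟨i, b⟩ := by positivity
    rcases mul_eq_zero.mp h2 with h3 | h3
    · linarith
    · linarith
  -- Part 2, case i ≥ 1 : direct comparison
  have main : ∀ i j : Fin k, 0 < (i : ℕ) → i < j →
      c ⟨j, ⟨0, hr j⟩⟩ < c ⟨i, ⟨0, hr i⟩⟩ := by
    intro i j hi hij
    have hijn : (i : ℕ) < (j : ℕ) := hij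
    have hne : (⟨i, ⟨0, hr i⟩⟩ : (i : Fin k) × Fin (r i)) ≠ ⟨j, ⟨0, hr j⟩⟩ := by
      intro h
      have h' : (i : ℕ) = (j : ℕ) :=
        congrArg (fun p : (i : Fin k) × Fin (r i) => ((p.1 : Fin k) : ℕ)) h
      omega
    have hkey := key ⟨i, ⟨0, hr i⟩⟩ ⟨j, ⟨0, hr j⟩⟩
    have hsum_pos : 0 < ∑ s, (A s ⟨i, ⟨0, hr i⟩⟩ - A s ⟨j, ⟨0, hr j⟩⟩) / D s * c s := by
      apply Finset.sum_pos'
      · intro s _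
        obtain ⟨l, b⟩ := s
        have hmono : A ⟨l, b⟩ ⟨j, ⟨0, hr j⟩⟩ ≤ A ⟨l, b⟩ ⟨i, ⟨0, hr i⟩⟩ := by
          rcases eq_or_ne (⟨l, b⟩ : (i : Fin k) × Fin (r i)) ⟨i, ⟨0, hr i⟩⟩ with heq | h1
          · rw [heq, Adiag, Aoff _ _ hne,
              if_neg (show ¬((i : ℕ) = (j : ℕ) ∨ (i : ℕ) = 0 ∨ (j : ℕ) = 0 ∨
                (j : ℕ) < (i : ℕ)) by omega)]
          · rcases eq_or_ne (⟨l, b⟩ : (i : Fin k) × Fin (r i)) ⟨j, ⟨0, hr j⟩⟩ with heq | h2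
            · rw [heq, Adiag]; exact hAnn _ _
            · rw [Aoff' l j b _ h2, Aoff' l i b _ h1]
              split_ifs with hc1 hc2 <;> norm_num
              exact hc2 (by omega)
        have := hpos (⟨l, b⟩ : (i : Fin k) × Fin (r i))
        have := hDnn (⟨l, b⟩ : (i : Fin k) × Fin (r i))
        apply mul_nonneg (div_nonneg (by linarith) (by linarith)) (by linarith)
      · refine ⟨⟨j, ⟨0, hr j⟩⟩, Finset.mem_univ _, ?_⟩
        rw [Adiag, Aoff' j i _ _ (Ne.symm hne),
          if_pos (show (j : ℕ) = (i : ℕ) ∨ (j : ℕ) = 0 ∨ (i : ℕ) = 0 ∨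
            (i : ℕ) < (j : ℕ) from Or.inr (Or.inr (Or.inr hijn)))]
        simp only [sub_zero]
        exact mul_pos (div_pos one_pos (hDpos _)) (hpos _)
    nlinarith [mul_pos hq0 hsum_pos]
  -- Part 2, comparing block 0 with block 1
  have first : c ⟨⟨1, hk1⟩, ⟨0, hr _⟩⟩ < c ⟨⟨0, hk0⟩, ⟨0, hr _⟩⟩ := by
    have hne : (⟨⟨0, hk0⟩, ⟨0, hr _⟩⟩ : (i : Fin k) × Fin (r i)) ≠ ⟨⟨1, hk1⟩, ⟨0, hr _⟩⟩ := by
      intro h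
      have h' := congrArg (fun p : (i : Fin k) × Fin (r i) => ((p.1 : Fin k) : ℕ)) h
      simp at h'
    have hpt : ∀ s, A s ⟨⟨0, hk0⟩, ⟨0, hr _⟩⟩ - A s ⟨⟨1, hk1⟩, ⟨0, hr _⟩⟩ =
        (if s = (⟨⟨1, hk1⟩, ⟨0, hr _⟩⟩ : (i : Fin k) × Fin (r i)) then (1:ℝ) else 0) -
        (if s = (⟨⟨0, hk0⟩, ⟨0, hr _⟩⟩ : (i : Fin k) × Fin (r i)) then 1 else 0) := by
      intro s
      rcases eq_or_ne s ⟨⟨0, hk0⟩, ⟨0, hr _⟩⟩ with rfl | h1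
      · rw [Adiag, Aoff _ _ hne, if_pos (by norm_num), if_neg hne, if_pos rfl]
      · rcases eq_or_ne s ⟨⟨1, hk1⟩, ⟨0, hr _⟩⟩ with rfl | h2
        · rw [Adiag, Aoff _ _ (Ne.symm hne), if_pos (by norm_num), if_pos rfl,
            if_neg (Ne.symm hne)]
        · obtain ⟨l, b⟩ := s
          rw [Aoff' l ⟨0, hk0⟩ b _ h1, Aoff' l ⟨1, hk1⟩ b _ h2,
            if_pos (show (l : ℕ) = ((⟨0, hk0⟩ : Fin k) : ℕ) ∨ (l : ℕ) = 0 ∨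
              ((⟨0, hk0⟩ : Fin k) : ℕ) = 0 ∨ ((⟨0, hk0⟩ : Fin k) : ℕ) < (l : ℕ) by
                right; right; left; rfl),
            if_pos (show (l : ℕ) = ((⟨1, hk1⟩ : Fin k) : ℕ) ∨ (l : ℕ) = 0 ∨
              ((⟨1, hk1⟩ : Fin k) : ℕ) = 0 ∨ ((⟨1, hk1⟩ : Fin k) : ℕ) < (l : ℕ) by
                simp only [Fin.val_mk]; omega),
            if_neg h2, if_neg h1]
          ring
    have h := swap_key _ _ hpt
    -- D comparison : D at block 1 is strictly smaller than at block 0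
    have hpt2 : ∀ t, A ⟨⟨0, hk0⟩, ⟨0, hr _⟩⟩ t - A ⟨⟨1, hk1⟩, ⟨0, hr _⟩⟩ t =
        (if t = (⟨⟨1, hk1⟩, ⟨0, hr _⟩⟩ : (i : Fin k) × Fin (r i)) then (1:ℝ) else 0) -
        (if t = (⟨⟨0, hk0⟩, ⟨0, hr _⟩⟩ : (i : Fin k) × Fin (r i)) then 1 else 0) +
        (if 2 ≤ ((t.1 : Fin k) : ℕ) then 1 else 0) := by
      intro t
      rcases eq_or_ne t ⟨⟨0, hk0⟩, ⟨0, hr _⟩⟩ with rfl | h1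
      · rw [Adiag, Aoff _ _ (Ne.symm hne), if_pos (by norm_num), if_neg hne, if_pos rfl,
          if_neg (by norm_num)]
        ring
      · rcases eq_or_ne t ⟨⟨1, hk1⟩, ⟨0, hr _⟩⟩ with rfl | h2
        · rw [Adiag, Aoff _ _ hne, if_pos (by norm_num), if_pos rfl, if_neg (Ne.symm hne),
            if_neg (by norm_num)]
          ring
        · obtain ⟨l, b⟩ := t
          rw [Aoff' ⟨0, hk0⟩ l _ b (Ne.symm h1), Aoff' ⟨1, hk1⟩ l _ b (Ne.symm h2),
            if_neg h2, if_neg h1,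
            if_pos (show ((⟨0, hk0⟩ : Fin k) : ℕ) = (l : ℕ) ∨ ((⟨0, hk0⟩ : Fin k) : ℕ) = 0 ∨
              (l : ℕ) = 0 ∨ (l : ℕ) < ((⟨0, hk0⟩ : Fin k) : ℕ) from Or.inr (Or.inl rfl))]
          by_cases hl : (l : ℕ) ≤ 1
          · rw [if_pos (show ((⟨1, hk1⟩ : Fin k) : ℕ) = (l : ℕ) ∨ ((⟨1, hk1⟩ : Fin k) : ℕ) = 0 ∨
                (l : ℕ) = 0 ∨ (l : ℕ) < ((⟨1, hk1⟩ : Fin k) : ℕ) by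
                  simp only [Fin.val_mk]; omega),
              if_neg (show ¬(2 ≤ ((⟨l, b⟩ : (i : Fin k) × Fin (r i)).1 : ℕ)) by
                  simp only [Fin.val_mk]; omega)]
            ring
          · rw [if_neg (show ¬(((⟨1, hk1⟩ : Fin k) : ℕ) = (l : ℕ) ∨ ((⟨1, hk1⟩ : Fin k) : ℕ) = 0 ∨
                (l : ℕ) = 0 ∨ (l : ℕ) < ((⟨1, hk1⟩ : Fin k) : ℕ)) by
                  simp only [Fin.val_mk]; omega),
              if_pos (show 2 ≤ ((⟨l, b⟩ : (i : Fin k) × Fin (r i)).1 : ℕ) by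
                  simp only [Fin.val_mk]; omega)]
            ring
    have hsub : D ⟨⟨0, hk0⟩, ⟨0, hr _⟩⟩ - D ⟨⟨1, hk1⟩, ⟨0, hr _⟩⟩ =
        ∑ t : (i : Fin k) × Fin (r i), (if 2 ≤ ((t.1 : Fin k) : ℕ) then (1:ℝ) else 0) := by
      have e : D ⟨⟨0, hk0⟩, ⟨0, hr _⟩⟩ - D ⟨⟨1, hk1⟩, ⟨0, hr _⟩⟩ =
          ∑ t, (A ⟨⟨0, hk0⟩, ⟨0, hr _⟩⟩ t - A ⟨⟨1, hk1⟩, ⟨0, hr _⟩⟩ t) :=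
        (Finset.sum_sub_distrib _ _).symm
      rw [e, Finset.sum_congr rfl fun t _ => hpt2 t, Finset.sum_add_distrib,
        Finset.sum_sub_distrib,
        Finset.sum_ite_eq' Finset.univ (⟨⟨1, hk1⟩, ⟨0, hr _⟩⟩ : (i : Fin k) × Fin (r i))
          (fun _ => (1:ℝ)),
        Finset.sum_ite_eq' Finset.univ (⟨⟨0, hk0⟩, ⟨0, hr _⟩⟩ : (i : Fin k) × Fin (r i))
          (fun _ => (1:ℝ))]
      simp
    have h2le : (1:ℝ) ≤ ∑ t : (i : Fin k) × Fin (r i),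
        (if 2 ≤ ((t.1 : Fin k) : ℕ) then (1:ℝ) else 0) := by
      have hss := Finset.single_le_sum
        (f := fun t : (i : Fin k) × Fin (r i) => if 2 ≤ ((t.1 : Fin k) : ℕ) then (1:ℝ) else 0)
        (fun t _ => by
          show (0:ℝ) ≤ if 2 ≤ ((t.1 : Fin k) : ℕ) then (1:ℝ) else 0
          split_ifs <;> norm_num)
        (Finset.mem_univ (⟨⟨2, hk2⟩, ⟨0, hr _⟩⟩ : (i : Fin k) × Fin (r i)))
      simpa using hss
    have hDlt : D ⟨⟨1, hk1⟩, ⟨0, hr _⟩⟩ < D ⟨⟨0, hk0⟩, ⟨0, hr _⟩⟩ := by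
      rw [← hsub] at h2le; linarith
    have hD1 := hDpos (⟨⟨1, hk1⟩, ⟨0, hr _⟩⟩ : (i : Fin k) × Fin (r i))
    have hD0 := hDpos (⟨⟨0, hk0⟩, ⟨0, hr _⟩⟩ : (i : Fin k) × Fin (r i))
    by_contra hle
    push_neg at hle
    have e1 : q / D ⟨⟨0, hk0⟩, ⟨0, hr _⟩⟩ < q / D ⟨⟨1, hk1⟩, ⟨0, hr _⟩⟩ :=
      div_lt_div_of_pos_left hq0 hD1 hDlt
    have t1 := mul_lt_mul_of_pos_left e1 (hpos (⟨⟨1, hk1⟩, ⟨0, hr _⟩⟩ : (i : Fin k) × Fin (r i)))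
    have t2 := mul_le_mul_of_nonneg_right hle (le_of_lt (div_pos hq0 hD0))
    have key2 : q * (c ⟨⟨0, hk0⟩, ⟨0, hr _⟩⟩ / D ⟨⟨0, hk0⟩, ⟨0, hr _⟩⟩) <
        q * (c ⟨⟨1, hk1⟩, ⟨0, hr _⟩⟩ / D ⟨⟨1, hk1⟩, ⟨0, hr _⟩⟩) := by
      calc q * (c ⟨⟨0, hk0⟩, ⟨0, hr _⟩⟩ / D ⟨⟨0, hk0⟩, ⟨0, hr _⟩⟩)
          = c ⟨⟨0, hk0⟩, ⟨0, hr _⟩⟩ * (q / D ⟨⟨0, hk0⟩, ⟨0, hr _⟩⟩) := by ring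
        _ ≤ c ⟨⟨1, hk1⟩, ⟨0, hr _⟩⟩ * (q / D ⟨⟨0, hk0⟩, ⟨0, hr _⟩⟩) := t2
        _ < c ⟨⟨1, hk1⟩, ⟨0, hr _⟩⟩ * (q / D ⟨⟨1, hk1⟩, ⟨0, hr _⟩⟩) := t1
        _ = q * (c ⟨⟨1, hk1⟩, ⟨0, hr _⟩⟩ / D ⟨⟨1, hk1⟩, ⟨0, hr _⟩⟩) := by ring
    linarith [h, key2, hle]
  refine ⟨part1, ?_⟩
  intro i j hij
  rcases Nat.eq_zero_or_pos (i : ℕ) with hi0 | hi0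
  · have hi : i = ⟨0, hk0⟩ := Fin.ext hi0
    subst hi
    by_cases hj1 : (j : ℕ) = 1
    · have hj : j = ⟨1, hk1⟩ := Fin.ext hj1
      subst hj
      exact first
    · have hj2 : (1 : ℕ) < (j : ℕ) := by
        have : (0 : ℕ) < (j : ℕ) := hij
        omega
      exact lt_trans (main ⟨1, hk1⟩ j (by norm_num) hj2) first
  · exact main i j hi0 hij
end

section
/- Let n ≥ 3 and let G⃗ be the directed graph on nodes {1,…,n} with edges (i, i+1) for 1 ≤ i ≤ n−1, edge (n,1), and edges (i,1) for 2 ≤ i ≤ n−1; that is, its adjacency matrix A has a_{i,i+1} = 1 for i < n, a_{i,1} = 1 for i ≥ 2, and all other entries zero. Then the eigenvector centrality c = (c₁,…,c_n)ᵗ of G⃗ satisfies the strict ranking c₁ > c₂ > ⋯ > c_n. -/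
open Matrix BigOperators

/-- The adjacency matrix (0-based indices) of the digraph with edges `(i, i+1)` for
`i < n - 1`, and edges `(i, 0)` for `i ≥ 1`. -/
def cycleChordAdj (n : ℕ) : Matrix (Fin n) (Fin n) ℝ :=
  fun i j => if (j : ℕ) = (i : ℕ) + 1 then 1
    else if 1 ≤ (i : ℕ) ∧ (j : ℕ) = 0 then 1 else 0

/-- The eigenvector centrality of the above digraph is strictly decreasing, i.e. it realizes
the strict ranking `c₁ > c₂ > ⋯ > c_n`. -/
theorem eigenvector_strict_ranking (n : ℕ) (hn : 3 ≤ n)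
    (c : Fin n → ℝ) (hpos : ∀ i, 0 < c i) (hnorm : ∑ i, c i = 1)
    (heig : (cycleChordAdj n)ᵀ.mulVec c = specRad (cycleChordAdj n) • c) :
    ∀ i j : Fin n, i < j → c j < c i := by
  set ρ := specRad (cycleChordAdj n) with hρ
  have h1lt : 1 < n := by omega
  have h2lt : 2 < n := by omega
  have h0lt : 0 < n := by omega
  -- the recurrence c_{m} = ρ c_{m+1}
  have key : ∀ m : ℕ, ∀ h : m + 1 < n,
      ρ * c ⟨m + 1, h⟩ = c ⟨m, Nat.lt_of_succ_lt h⟩ := by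
    intro m h
    have h0 := congrFun heig ⟨m + 1, h⟩
    simp only [Pi.smul_apply, smul_eq_mul] at h0
    rw [← h0, mulVec, dotProduct]
    rw [Finset.sum_eq_single (⟨m, Nat.lt_of_succ_lt h⟩ : Fin n)]
    · simp [cycleChordAdj, transpose_apply]
    · intro b _ hb
      have hbv : m ≠ (b : ℕ) := fun hh => hb (Fin.ext hh.symm)
      simp [cycleChordAdj, transpose_apply, hbv]
    · simp
  -- the equation at index 0
  have h0eq : ρ * c ⟨0, h0lt⟩
      = ∑ i ∈ Finset.univ.filter (fun i : Fin n => 1 ≤ (i : ℕ)), c i := by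
    have h0 := congrFun heig ⟨0, h0lt⟩
    simp only [Pi.smul_apply, smul_eq_mul] at h0
    rw [← h0, mulVec, dotProduct]
    have : ∀ i : Fin n, (cycleChordAdj n)ᵀ ⟨0, h0lt⟩ i * c i
        = if 1 ≤ (i : ℕ) then c i else 0 := by
      intro i
      by_cases hi : 1 ≤ (i : ℕ) <;> simp [cycleChordAdj, transpose_apply, hi]
    rw [Finset.sum_congr rfl (fun i _ => this i), Finset.sum_filter]
  -- ρ > 0
  have hρpos : 0 < ρ := by
    have h := key 0 h1lt
    nlinarith [hpos ⟨1, h1lt⟩, hpos ⟨0, h0lt⟩, h]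
  -- ρ > 1
  have hρ1 : 1 < ρ := by
    by_contra hle
    push_neg at hle
    have hc1 : ρ * c ⟨1, h1lt⟩ = c ⟨0, h0lt⟩ := key 0 h1lt
    have hc2 : ρ * c ⟨2, h2lt⟩ = c ⟨1, h1lt⟩ := key 1 h2lt
    have hsub : ({⟨1, h1lt⟩, ⟨2, h2lt⟩} : Finset (Fin n))
        ⊆ Finset.univ.filter (fun i : Fin n => 1 ≤ (i : ℕ)) := by
      intro x hx
      simp only [Finset.mem_insert, Finset.mem_singleton] at hx
      rcases hx with h | h <;> subst h <;> simp
    have hne : (⟨1, h1lt⟩ : Fin n) ≠ ⟨2, h2lt⟩ := by simp [Fin.ext_iff]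
    have hsum : c ⟨1, h1lt⟩ + c ⟨2, h2lt⟩
        ≤ ∑ i ∈ Finset.univ.filter (fun i : Fin n => 1 ≤ (i : ℕ)), c i := by
      rw [← Finset.sum_pair hne]
      exact Finset.sum_le_sum_of_subset_of_nonneg hsub
        (fun i _ _ => (hpos i).le)
    nlinarith [hpos ⟨0, h0lt⟩, hpos ⟨1, h1lt⟩, hpos ⟨2, h2lt⟩]
  -- step: c_{m+1} < c_m
  have step : ∀ m : ℕ, ∀ h : m + 1 < n,
      c ⟨m + 1, h⟩ < c ⟨m, Nat.lt_of_succ_lt h⟩ := by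
    intro m h
    have := key m h
    nlinarith [hpos ⟨m + 1, h⟩]
  -- conclude by induction
  have main : ∀ m : ℕ, ∀ hm : m < n, ∀ i : Fin n, (i : ℕ) < m →
      c ⟨m, hm⟩ < c i := by
    intro m
    induction m with
    | zero => intro hm i hi; omega
    | succ k ih =>
      intro hm i hi
      have hstep := step k hm
      rcases Nat.lt_or_ge (i : ℕ) k with h | h
      · exact hstep.trans (ih (Nat.lt_of_succ_lt hm) i h)
      · have : (i : ℕ) = k := by omega
        have : i = ⟨k, Nat.lt_of_succ_lt hm⟩ := Fin.ext this
        rw [this]; exact hstep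
  intro i j hij
  have := main (j : ℕ) j.isLt i hij
  simpa using this
end

section
/- Let G⃗ be the 6-node directed graph without loops whose adjacency matrix is A⃗(1,3,2), with rows (0,1,1,1,1,1), (1,0,1,1,0,0), (1,1,0,1,0,0), (1,1,1,0,0,0), (1,1,1,1,0,1), (1,1,1,1,1,0). For any damping factor q ∈ (0,1), the PageRank centrality c of G⃗ with damping factor q satisfies c₁ > c₂ = c₃ = c₄ > c₅ = c₆. -/
open Matrix BigOperators

@[simp] private lemma cons_val_five' {α : Type*} (x : α) (u : Fin 5 → α) :
    Matrix.vecCons x u 5 = u 4 := rfl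

/-- The adjacency matrix `A⃗(1,3,2)` of the 6-node directed graph without loops. -/
def dirA132 : Matrix (Fin 6) (Fin 6) ℝ :=
  !![0,1,1,1,1,1;
     1,0,1,1,0,0;
     1,1,0,1,0,0;
     1,1,1,0,0,0;
     1,1,1,1,0,1;
     1,1,1,1,1,0]

set_option maxHeartbeats 1000000 in
/-- For any damping factor `q ∈ (0,1)`, the PageRank centrality of `G⃗(1,3,2)` satisfies
`c₁ > c₂ = c₃ = c₄ > c₅ = c₆`. -/
theorem pageRank_ranking_dirG132 (q : ℝ) (hq : q ∈ Set.Ioo (0:ℝ) 1)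
    (c : Fin 6 → ℝ) (hpos : ∀ i, 0 < c i) (hnorm : ∑ i, c i = 1)
    (hPR : ∀ i, q * ∑ j, googleB dirA132 i j * c j = c i - (1 - q) / 6) :
    c 1 < c 0 ∧ c 1 = c 2 ∧ c 2 = c 3 ∧ c 4 < c 3 ∧ c 4 = c 5 := by
  obtain ⟨hq0, hq1⟩ := hq
  have e0 := hPR 0
  have e1 := hPR 1
  have e2 := hPR 2
  have e3 := hPR 3
  have e4 := hPR 4
  have e5 := hPR 5
  simp [googleB, dirA132, Fin.sum_univ_six] at e0 e1 e2 e3 e4 e5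
  norm_num [googleB, dirA132, Fin.sum_univ_six, Matrix.vecHead, Matrix.vecTail,
    Function.comp] at e0 e1 e2 e3 e4 e5
  have h12 : c 1 = c 2 := by nlinarith [hpos 1, hpos 2]
  have h23 : c 2 = c 3 := by nlinarith [hpos 2, hpos 3]
  have h45 : c 4 = c 5 := by nlinarith [hpos 4, hpos 5]
  have h01 : c 1 < c 0 := by nlinarith [hpos 0, hpos 1]
  have h34 : c 4 < c 3 := by nlinarith [mul_pos hq0 (hpos 1), mul_pos hq0 (hpos 2), mul_pos hq0 (hpos 4)]
  exact ⟨h01, h12, h23, h34, h45⟩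
end

section
/- For every q ∈ (0,1), every n ∈ ℕ, and every surjective map φ : {1,…,n} → {1,…,k} with k ≥ 3, there exists an unweighted directed graph WITHOUT loops on n nodes, in which every node has positive outdegree, whose PageRank centrality c with damping factor q satisfies: c_i > c_j iff φ(i) < φ(j), and c_i = c_j iff φ(i) = φ(j). -/
open Matrix BigOperators

/-- Inverse ranking problem for PageRank on directed graphs without loops: for every
`q ∈ (0,1)` and every ranking (possibly with ties) `φ` of `n` nodes onto `k ≥ 3` levels,
there is an unweighted loopless directed graph on `n` nodes, with every outdegree positive,
whose PageRank centrality with damping factor `q` realizes exactly the ranking `φ`. -/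
theorem inverse_ranking_pageRank_directed (q : ℝ) (hq : q ∈ Set.Ioo (0:ℝ) 1)
    (n k : ℕ) (hk : 3 ≤ k)
    (φ : Fin n → Fin k) (hφ : Function.Surjective φ) :
    ∃ A : Matrix (Fin n) (Fin n) ℝ,
      (∀ i j, A i j = 0 ∨ A i j = 1) ∧ (∀ i, A i i = 0) ∧
      (∀ i, 0 < ∑ j, A i j) ∧
      ∃ c : Fin n → ℝ, (∀ i, 0 < c i) ∧ (∑ i, c i = 1) ∧
        (∀ i, q * ∑ j, googleB A i j * c j = c i - (1 - q) / n) ∧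
        (∀ i j : Fin n, (c j < c i ↔ φ i < φ j) ∧ (c i = c j ↔ φ i = φ j)) := by
  classical
  obtain ⟨hq0, hq1⟩ := hq
  have hkn : k ≤ n := by
    have := Fintype.card_le_of_surjective φ hφ
    simpa using this
  have hn3 : 3 ≤ n := le_trans hk hkn
  have hn0 : (0:ℝ) < (n:ℝ) := by positivity
  set z : Fin k := ⟨0, by omega⟩ with hz
  set o : Fin k := ⟨1, by omega⟩ with ho
  set tw : Fin k := ⟨2, by omega⟩ with htw
  clear_value z o tw
  have hoz : o ≠ z := by simp [ho, hz, Fin.ext_iff]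
  -- the adjacency matrix
  set A : Matrix (Fin n) (Fin n) ℝ :=
    (fun i j => if i ≠ j ∧ (φ i = z ∨ φ j ≤ φ i) then (1:ℝ) else 0) with hAdef
  clear_value A
  have hA01 : ∀ i j, A i j = 0 ∨ A i j = 1 := by
    intro i j
    simp only [hAdef]
    split <;> simp
  have hAdiag : ∀ i, A i i = 0 := by
    intro i; simp [hAdef]
  have hAnn : ∀ i j, 0 ≤ A i j := by
    intro i j
    rcases hA01 i j with h | h <;> rw [h] <;> norm_num
  -- out-degrees
  set deg : Fin n → ℝ := fun i => ∑ t, A i t with hdegdef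
  clear_value deg
  have hdegpos : ∀ i, 0 < deg i := by
    intro i
    have hex : ∃ j, A i j = 1 := by
      by_cases hi : φ i = z
      · obtain ⟨t, ht⟩ := hφ o
        refine ⟨t, ?_⟩
        have hti : t ≠ i := by
          intro h; rw [h] at ht; exact hoz (ht ▸ hi ▸ rfl) -- fix
        simp [hAdef, Ne.symm hti, hi]
      · obtain ⟨t, ht⟩ := hφ z
        have hti : t ≠ i := by
          intro h; rw [h] at ht; exact hi ht
        have hle : φ t ≤ φ i := by
          rw [ht, hz]; exact Fin.mk_le_of_le_val (Nat.zero_le _)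
        refine ⟨t, ?_⟩
        simp [hAdef, Ne.symm hti, hle]
    obtain ⟨j, hj⟩ := hex
    simp only [hdegdef]
    refine Finset.sum_pos' (fun t _ => hAnn i t) ⟨j, Finset.mem_univ j, by rw [hj]; norm_num⟩
  -- level degree
  set D : Fin k → ℝ := fun a => (∑ t, if a = z ∨ φ t ≤ a then (1:ℝ) else 0) - 1 with hDdef
  clear_value D
  have hdegD : ∀ i, deg i = D (φ i) := by
    intro i
    have hpt : ∀ j, A i j =
        (if φ i = z ∨ φ j ≤ φ i then (1:ℝ) else 0) - (if j = i then 1 else 0) := by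
      intro j
      by_cases hji : j = i
      · subst hji; simp [hAdef]
      · simp [hAdef, hji, Ne.symm hji]
    simp only [hdegdef, hDdef]
    rw [Finset.sum_congr rfl (fun j _ => hpt j), Finset.sum_sub_distrib]
    congr 1
    simp
  have hDpos : ∀ a, 0 < D a := by
    intro a
    obtain ⟨i, rfl⟩ := hφ a
    rw [← hdegD]; exact hdegpos i
  have hDoz : D o < D z := by
    obtain ⟨t2, ht2⟩ := hφ tw
    have hzval : (∑ t : Fin n, if z = z ∨ φ t ≤ z then (1:ℝ) else 0) = n := by
      simp
    have hlt : (∑ t : Fin n, if o = z ∨ φ t ≤ o then (1:ℝ) else 0)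
        < ∑ t : Fin n, if z = z ∨ φ t ≤ z then (1:ℝ) else 0 := by
      refine Finset.sum_lt_sum (fun t _ => ?_) ⟨t2, Finset.mem_univ t2, ?_⟩
      · rw [if_pos (Or.inl rfl)]
        split <;> norm_num
      · have hnot : ¬ (o = z ∨ φ t2 ≤ o) := by
          rintro (h | h)
          · exact hoz h
          · rw [ht2] at h
            have := h
            rw [Fin.le_def] at this
            simp [htw, ho] at this
        rw [if_neg hnot, if_pos (Or.inl rfl)]
        norm_num
    simp only [hDdef]
    refine sub_lt_sub_right ?_ 1
    simpa using hlt
  -- the google matrix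
  have hdeg' : ∀ j, 0 < ∑ t, A j t := by
    intro j
    have := hdegpos j
    simp only [hdegdef] at this
    exact this
  have hBnn : ∀ i j, 0 ≤ googleB A i j := by
    intro i j
    exact div_nonneg (hAnn j i) (le_of_lt (hdeg' j))
  have hBcol : ∀ j, ∑ i, googleB A i j = 1 := by
    intro j
    have h1 : ∑ i, googleB A i j = (∑ i, A j i) / (∑ t, A j t) := by
      simp only [googleB]
      rw [Finset.sum_div]
    rw [h1]
    exact div_self (ne_of_gt (hdeg' j))
  -- nonnegativity principle
  have key : ∀ (β : ℝ), 0 ≤ β → ∀ c : Fin n → ℝ,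
      (∀ i, c i = β + q * ∑ j, googleB A i j * c j) → ∀ i, 0 ≤ c i := by
    intro β hβ c hc
    by_contra hcon
    push_neg at hcon
    obtain ⟨i0, hi0⟩ := hcon
    set S : Finset (Fin n) := Finset.univ.filter (fun i => c i < 0) with hS
    clear_value S
    have hSne : S.Nonempty := ⟨i0, by simp [hS, hi0]⟩
    have htneg : ∑ i ∈ S, c i < 0 :=
      Finset.sum_neg (fun i hi => by simpa [hS] using hi) hSne
    set σ : Fin n → ℝ := fun j => ∑ i ∈ S, googleB A i j with hσ
    clear_value σ
    have hσ1 : ∀ j, σ j ≤ 1 := by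
      intro j
      simp only [hσ]
      calc ∑ i ∈ S, googleB A i j ≤ ∑ i, googleB A i j :=
            Finset.sum_le_sum_of_subset_of_nonneg (Finset.subset_univ S)
              (fun i _ _ => hBnn i j)
        _ = 1 := hBcol j
    have hσ0 : ∀ j, 0 ≤ σ j := fun j => by
      simp only [hσ]
      exact Finset.sum_nonneg fun i _ => hBnn i j
    have hswap : ∑ i ∈ S, ∑ j, googleB A i j * c j = ∑ j, σ j * c j := by
      rw [Finset.sum_comm]
      simp_rw [hσ, Finset.sum_mul]
    have hsum : ∑ i ∈ S, c i = β * S.card + q * ∑ j, σ j * c j := by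
      rw [Finset.sum_congr rfl (fun i _ => hc i), Finset.sum_add_distrib,
        ← Finset.mul_sum, hswap]
      simp [mul_comm]
    have hlow : ∑ i ∈ S, c i ≤ ∑ j, σ j * c j := by
      have hsp : ∑ j, σ j * c j =
          ∑ j ∈ Finset.univ.filter (fun j => c j < 0), σ j * c j
            + ∑ j ∈ Finset.univ.filter (fun j => ¬ c j < 0), σ j * c j :=
        (Finset.sum_filter_add_sum_filter_not _ _ _).symm
      have h1 : ∑ j ∈ S, c j ≤ ∑ j ∈ S, σ j * c j := by
        refine Finset.sum_le_sum fun j hj => ?_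
        have hcj : c j < 0 := by simpa [hS] using hj
        have := mul_le_mul_of_nonpos_right (hσ1 j) (le_of_lt hcj)
        linarith [this]
      have h2 : (0:ℝ) ≤ ∑ j ∈ Finset.univ.filter (fun j => ¬ c j < 0), σ j * c j := by
        refine Finset.sum_nonneg fun j hj => ?_
        have hcj : 0 ≤ c j := by
          have := Finset.mem_filter.mp hj
          push_neg at this
          exact this.2
        exact mul_nonneg (hσ0 j) hcj
      rw [hsp, ← hS]
      linarith
    have hcard : (0:ℝ) ≤ β * S.card := mul_nonneg hβ (Nat.cast_nonneg _)
    nlinarith [mul_le_mul_of_nonneg_left hlow (le_of_lt hq0),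
      mul_pos (sub_pos.mpr hq1) (neg_pos.mpr htneg)]
  -- existence of the PageRank vector
  set β : ℝ := (1 - q) / n with hβdef
  clear_value β
  have hβpos : 0 < β := by
    rw [hβdef]
    exact div_pos (by linarith) hn0
  have hMapply : ∀ c : Fin n → ℝ, ∀ i,
      Matrix.mulVec (1 - q • googleB A) c i = c i - q * ∑ j, googleB A i j * c j := by
    intro c i
    simp [Matrix.mulVec, dotProduct, Matrix.sub_apply, Matrix.one_apply,
      Matrix.smul_apply, smul_eq_mul, sub_mul, Finset.sum_sub_distrib, ite_mul,
      Finset.mul_sum, mul_assoc]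
  have hinj : Function.Injective (Matrix.toLin' (1 - q • googleB A)) := by
    rw [injective_iff_map_eq_zero]
    intro c hc0
    have hc : ∀ i, c i = 0 + q * ∑ j, googleB A i j * c j := by
      intro i
      have h1 := congrFun hc0 i
      rw [Matrix.toLin'_apply] at h1
      have h2 := hMapply c i
      rw [h2] at h1
      simp only [Pi.zero_apply] at h1
      linarith
    have hc' : ∀ i, (-c) i = 0 + q * ∑ j, googleB A i j * (-c) j := by
      intro i
      have h1 := hc i
      simp only [Pi.neg_apply, mul_neg, Finset.sum_neg_distrib]
      linarith
    have h1 := key 0 le_rfl c hc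
    have h2 := key 0 le_rfl (-c) hc'
    funext i
    have := h2 i
    simp only [Pi.neg_apply] at this
    have := h1 i
    simp only [Pi.zero_apply]
    linarith [h1 i, h2 i, (by simp : (-c) i = - c i)]
  obtain ⟨c, hcL⟩ := (LinearMap.injective_iff_surjective.mp hinj) (fun _ => β)
  have heq : ∀ i, c i = β + q * ∑ j, googleB A i j * c j := by
    intro i
    have h1 := congrFun hcL i
    rw [Matrix.toLin'_apply] at h1
    have h2 := hMapply c i
    rw [h2] at h1
    linarith
  have hcnn : ∀ i, 0 ≤ c i := key β (le_of_lt hβpos) c heq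
  have hcpos : ∀ i, 0 < c i := by
    intro i
    have h1 := heq i
    have hs : 0 ≤ ∑ j, googleB A i j * c j :=
      Finset.sum_nonneg fun j _ => mul_nonneg (hBnn i j) (hcnn j)
    nlinarith
  have hsum1 : ∑ i, c i = 1 := by
    have hswap2 : ∑ i, ∑ j, googleB A i j * c j = ∑ j, c j := by
      rw [Finset.sum_comm]
      refine Finset.sum_congr rfl fun j _ => ?_
      rw [← Finset.sum_mul, hBcol j, one_mul]
    have h1 : ∑ i, c i = n * β + q * ∑ j, c j := by
      conv_lhs => rw [Finset.sum_congr rfl fun i _ => heq i]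
      rw [Finset.sum_add_distrib, ← Finset.mul_sum, hswap2,
        Finset.sum_const, Finset.card_univ, Fintype.card_fin, nsmul_eq_mul]
    have hnβ : (n:ℝ) * β = 1 - q := by
      rw [hβdef]
      field_simp
    have hq1' : (1:ℝ) - q ≠ 0 := by linarith
    have h3 : (1 - q) * (∑ i, c i) = (1 - q) * 1 := by
      linear_combination h1 + hnβ
    exact mul_left_cancel₀ hq1' h3
  -- structure of the equations in terms of levels
  set F : Fin n → ℝ := fun j => c j / deg j with hFdef
  clear_value F
  have hFpos : ∀ j, 0 < F j := fun j => by
    simp only [hFdef]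
    exact div_pos (hcpos j) (hdegpos j)
  set T : Fin k → Finset (Fin n) :=
    fun a => Finset.univ.filter (fun t => φ t = z ∨ a ≤ φ t) with hTdef
  clear_value T
  have hmemT : ∀ (i : Fin n) (a : Fin k), a ≤ φ i → i ∈ T a := by
    intro i a ha
    simp [hTdef, ha]
  set G : Fin k → ℝ := fun a => ∑ t ∈ T a, F t with hGdef
  clear_value G
  have hstar : ∀ i, c i = β + q * (G (φ i) - F i) := by
    intro i
    have h1 : ∀ j : Fin n, googleB A i j * c j =
        if j ≠ i ∧ (φ j = z ∨ φ i ≤ φ j) then F j else 0 := by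
      intro j
      by_cases hcond : j ≠ i ∧ (φ j = z ∨ φ i ≤ φ j)
      · rw [if_pos hcond]
        have hA1 : A j i = 1 := by
          simp only [hAdef]
          rw [if_pos hcond]
        simp only [googleB, hFdef, hdegdef, hA1]
        rw [one_div_mul_eq_div]
      · rw [if_neg hcond]
        have hA0 : A j i = 0 := by
          simp only [hAdef]
          rw [if_neg hcond]
        simp [googleB, hA0]
    have hfe : Finset.univ.filter (fun j => j ≠ i ∧ (φ j = z ∨ φ i ≤ φ j))
        = (T (φ i)).erase i := by
      ext t
      simp only [hTdef, Finset.mem_erase, Finset.mem_filter, Finset.mem_univ, true_and]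
    have h2 : ∑ j, googleB A i j * c j = G (φ i) - F i := by
      rw [Finset.sum_congr rfl fun j _ => h1 j, ← Finset.sum_filter, hfe,
        Finset.sum_erase_eq_sub (hmemT i (φ i) le_rfl), hGdef]
    have h3 := heq i
    rw [h2] at h3
    exact h3
  -- equality within a level
  have hcompeq : ∀ i j, φ i = φ j → c i = c j := by
    intro i j hij
    have hi' := hstar i
    have hj' := hstar j
    rw [hij] at hi'
    have hFij : F j - F i = (c j - c i) / D (φ j) := by
      simp only [hFdef]
      rw [hdegD i, hdegD j, hij, sub_div]
    have h1 : c i - c j = q * (F j - F i) := by linear_combination hi' - hj'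
    rw [hFij] at h1
    have hD := hDpos (φ j)
    have hD' : D (φ j) ≠ 0 := ne_of_gt hD
    have h2 : (c i - c j) * (D (φ j) + q) = 0 := by
      field_simp at h1
      linarith
    rcases mul_eq_zero.mp h2 with h | h
    · linarith [sub_eq_zero.mp h]
    · linarith
  -- the universal levels
  have hTz : T z = Finset.univ := by
    ext t
    simp only [hTdef, Finset.mem_filter, Finset.mem_univ, true_and, iff_true]
    right
    rw [Fin.le_def]
    simp [hz]
  have hTo : T o = Finset.univ := by
    ext t
    simp only [hTdef, Finset.mem_filter, Finset.mem_univ, true_and, iff_true]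
    by_cases h : φ t = z
    · exact Or.inl h
    · right
      rw [Fin.le_def]
      have h0 : (φ t).val ≠ 0 := by
        intro h0
        exact h (Fin.ext (by simp [hz, h0]))
      simp only [ho]
      omega
  have hGzo : G z = G o := by
    simp only [hGdef]
    rw [hTz, hTo]
  -- level 0 beats level 1
  have h01 : ∀ i j, φ i = z → φ j = o → c j < c i := by
    intro i j hi hj
    by_contra hcon
    push_neg at hcon
    have hi' := hstar i
    have hj' := hstar j
    rw [hi] at hi'
    rw [hj] at hj'
    have h1 : c i - c j = q * (F j - F i) := by
      linear_combination hi' - hj' + q * hGzo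
    have h2 : q * (F j - F i) ≤ 0 := by linarith
    have h3 : F j - F i ≤ 0 := by
      by_contra hp
      push_neg at hp
      linarith [mul_pos hq0 hp]
    have h4 : c j / D o ≤ c i / D z := by
      have hFi : F i = c i / D z := by
        simp only [hFdef]
        rw [hdegD i, hi]
      have hFj : F j = c j / D o := by
        simp only [hFdef]
        rw [hdegD j, hj]
      rw [← hFi, ← hFj]
      linarith
    have h5 : c j * D z ≤ c i * D o := (div_le_div_iff₀ (hDpos o) (hDpos z)).mp h4
    linarith [h5, mul_le_mul_of_nonneg_right hcon (le_of_lt (hDpos z)),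
      mul_lt_mul_of_pos_left hDoz (hcpos i)]
  -- strict comparison across levels
  have hlt : ∀ i j, φ i < φ j → c j < c i := by
    intro i j hij
    by_cases hiz : φ i = z
    · by_cases hjo : φ j = o
      · exact h01 i j hiz hjo
      · obtain ⟨t1, ht1⟩ := hφ o
        have hFt1 : F i < F t1 := by
          have hc1 := h01 i t1 hiz ht1
          have hi' := hstar i
          have ht' := hstar t1
          rw [hiz] at hi'
          rw [ht1] at ht'
          have h1 : c i - c t1 = q * (F t1 - F i) := by
            linear_combination hi' - ht' + q * hGzo
          by_contra hp
          push_neg at hp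
          have hx : q * (F t1 - F i) ≤ q * 0 :=
            mul_le_mul_of_nonneg_left (by linarith) (le_of_lt hq0)
          rw [mul_zero] at hx
          linarith
        have ht1nmem : t1 ∉ T (φ j) := by
          simp only [hTdef, Finset.mem_filter, Finset.mem_univ, true_and]
          rintro (h | h)
          · rw [ht1] at h
            exact hoz h
          · rw [ht1, Fin.le_def] at h
            have hval1 : (φ j).val ≤ 1 := by simpa [ho] using h
            have hval0 : (φ i).val < (φ j).val := hij
            rw [hiz] at hval0
            simp only [hz] at hval0
            have : φ j = o := Fin.ext (by simp [ho]; omega)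
            exact hjo this
        have hGdiff : F t1 ≤ G z - G (φ j) := by
          have hsd : G z - G (φ j) = ∑ t ∈ T z \ T (φ j), F t := by
            rw [hGdef]
            exact (Finset.sum_sdiff_eq_sub (by rw [hTz]; exact Finset.subset_univ _)).symm
          rw [hsd]
          refine Finset.single_le_sum (fun t _ => le_of_lt (hFpos t)) ?_
          rw [Finset.mem_sdiff, hTz]
          exact ⟨Finset.mem_univ _, ht1nmem⟩
        have hi' := hstar i
        have hj' := hstar j
        rw [hiz] at hi'
        have h2 : c i - c j = q * ((G z - G (φ j)) - F i + F j) := by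
          linear_combination hi' - hj'
        have h3 : 0 < (G z - G (φ j)) - F i + F j := by
          linarith [hFpos j]
        linarith [mul_pos hq0 h3, h2]
    · have hsub : T (φ j) ⊆ T (φ i) := by
        intro t ht
        simp only [hTdef, Finset.mem_filter, Finset.mem_univ, true_and] at ht ⊢
        rcases ht with h | h
        · exact Or.inl h
        · exact Or.inr (le_trans (le_of_lt hij) h)
      have hinmem : i ∉ T (φ j) := by
        simp only [hTdef, Finset.mem_filter, Finset.mem_univ, true_and]
        rintro (h | h)
        · exact hiz h
        · exact absurd hij (not_lt.mpr h)
      have hGdiff : F i ≤ G (φ i) - G (φ j) := by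
        have hsd : G (φ i) - G (φ j) = ∑ t ∈ T (φ i) \ T (φ j), F t := by
          rw [hGdef]
          exact (Finset.sum_sdiff_eq_sub hsub).symm
        rw [hsd]
        refine Finset.single_le_sum (fun t _ => le_of_lt (hFpos t)) ?_
        rw [Finset.mem_sdiff]
        exact ⟨hmemT i (φ i) le_rfl, hinmem⟩
      have hi' := hstar i
      have hj' := hstar j
      have h2 : c i - c j = q * ((G (φ i) - G (φ j)) - F i + F j) := by
        linear_combination hi' - hj'
      have h3 : 0 < (G (φ i) - G (φ j)) - F i + F j := by
        linarith [hFpos j]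
      linarith [mul_pos hq0 h3, h2]
  -- assemble
  refine ⟨A, hA01, hAdiag, fun i => by have hd := hdegpos i; simp only [hdegdef] at hd; exact hd, c, hcpos, hsum1,
    fun i => by linarith [heq i], fun i j => ⟨⟨?_, hlt i j⟩, ⟨?_, hcompeq i j⟩⟩⟩
  · intro hcj
    rcases lt_trichotomy (φ i) (φ j) with h | h | h
    · exact h
    · exact absurd hcj (by rw [hcompeq i j h]; exact lt_irrefl _)
    · exact absurd hcj (not_lt.mpr (le_of_lt (hlt j i h)))
  · intro hceq
    rcases lt_trichotomy (φ i) (φ j) with h | h | h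
    · exact absurd hceq (ne_of_gt (hlt i j h))
    · exact h
    · exact absurd hceq (ne_of_lt (hlt j i h))
end
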